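/- If c : Finset ℕ → Fin r is a finite coloring of the nonempty finite subsets of ℕ, then there exist a color i and an infinite pairwise-disjoint family 𝒮 of nonempty finite subsets of ℕ such that every nonempty union of finitely many members of 𝒮 has color i. -/

import Mathlib

open Hindman


/-- The set of nonempty unions of finitely many members of `𝒮`. -/
def NU (𝒮 : Set (Finset ℕ)) : Set (Finset ℕ) :=
  {T | T.Nonempty ∧ ∃ F : Finset (Finset ℕ), ↑F ⊆ 𝒮 ∧ T = F.sup id}

/-- `𝒮` is an IP family: closed under finite unions and containing an infinite
pairwise disjoint subfamily. -/
def IsIP (𝒮 : Set (Finset ℕ)) : Prop :=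
  (∀ A ∈ 𝒮, ∀ B ∈ 𝒮, A ∪ B ∈ 𝒮) ∧
    ∃ 𝒟 ⊆ 𝒮, 𝒟.Infinite ∧ 𝒟.Pairwise Disjoint

/-- `𝒮` generates an IP set: it contains infinitely many pairwise disjoint elements. -/
def GeneratesIP (𝒮 : Set (Finset ℕ)) : Prop :=
  ∃ 𝒟 ⊆ 𝒮, 𝒟.Infinite ∧ 𝒟.Pairwise Disjoint

/-- `𝒮 − ℬ`: the members of `𝒮` disjoint from every member of `ℬ`. -/
def SMinus (𝒮 ℬ : Set (Finset ℕ)) : Set (Finset ℕ) :=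
  {T ∈ 𝒮 | ∀ B ∈ ℬ, Disjoint T B}

/-- `𝒟` half-matches `B` with respect to the coloring `c`. -/
def HalfMatch {α : Type*} (c : Finset ℕ → α) (𝒟 : Set (Finset ℕ)) (B : Finset ℕ) : Prop :=
  ∃ D ∈ 𝒟, Disjoint D B ∧ c B = c (D ∪ B)

/-- `𝒟` full-matches `B` with respect to the coloring `c`. -/
def FullMatch {α : Type*} (c : Finset ℕ → α) (𝒟 : Set (Finset ℕ)) (B : Finset ℕ) : Prop :=
  ∃ D ∈ 𝒟, Disjoint D B ∧ c D = c B ∧ c B = c (D ∪ B)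


section FUaux

/-- Binary support of a natural number. -/
def binSupp (n : ℕ) : Finset ℕ := n.bitIndices.toFinset

lemma sum_binSupp (n : ℕ) : ∑ i ∈ binSupp n, 2 ^ i = n := by
  rw [binSupp, List.sum_toFinset _ (Nat.bitIndices_sorted.nodup)]
  exact Nat.twoPowSum_bitIndices n

lemma binSupp_sum_pow (s : Finset ℕ) : binSupp (∑ i ∈ s, 2 ^ i) = s := by
  have h1 : ∑ i ∈ s, 2 ^ i = (List.map (fun i => 2 ^ i) (s.sort (· ≤ ·))).sum := by
    rw [← List.sum_toFinset _ (s.sort_nodup (· ≤ ·)), Finset.sort_toFinset]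
  rw [binSupp, h1, Nat.bitIndices_twoPowsum (Finset.sortedLT_sort s), Finset.sort_toFinset]

lemma binSupp_add {x y : ℕ} (h : Disjoint (binSupp x) (binSupp y)) :
    binSupp (x + y) = binSupp x ∪ binSupp y := by
  have : x + y = ∑ i ∈ binSupp x ∪ binSupp y, 2 ^ i := by
    rw [Finset.sum_union h, sum_binSupp, sum_binSupp]
  rw [this, binSupp_sum_pow]

lemma two_pow_le_of_mem_binSupp {i n : ℕ} (h : i ∈ binSupp n) : 2 ^ i ≤ n := by
  conv_rhs => rw [← sum_binSupp n]
  exact Finset.single_le_sum (fun j _ => Nat.zero_le _) h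

lemma le_of_mem_binSupp_dvd {M n i : ℕ} (hd : 2 ^ M ∣ n) (h : i ∈ binSupp n) : M ≤ i := by
  obtain ⟨m, rfl⟩ := hd
  rw [binSupp, Nat.bitIndices_two_pow_mul, List.mem_toFinset, List.mem_map] at h
  obtain ⟨a, -, rfl⟩ := h
  omega

lemma binSupp_nonempty {n : ℕ} (h : 0 < n) : (binSupp n).Nonempty := by
  by_contra hc
  rw [Finset.not_nonempty_iff_eq_empty] at hc
  have := sum_binSupp n
  rw [hc] at this
  simp at this
  omega

lemma FU_FS_pos {a : Stream' ℕ} (ha : ∀ i, 0 < a.get i) {m : ℕ} (hm : m ∈ FS a) : 0 < m := by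
  induction hm with
  | head' a => exact ha 0
  | tail' a m h ih => exact ih (fun i => ha (i + 1))
  | cons' a m h ih =>
    have h0 : 0 < a.head := ha 0
    omega

lemma FU_exists_block (b : Stream' ℕ) (N M : ℕ) :
    ∃ s : Finset ℕ, s.Nonempty ∧ (∀ i ∈ s, N < i) ∧ 2 ^ M ∣ ∑ i ∈ s, b.get i := by
  set P : ℕ → ℕ := fun j => ∑ t ∈ Finset.Ico (N + 1) (N + 1 + j), b.get t with hP
  have hmaps : ∀ j ∈ Finset.range (2 ^ M + 1), P j % 2 ^ M ∈ Finset.range (2 ^ M) := by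
    intro j _
    exact Finset.mem_range.mpr (Nat.mod_lt _ (Nat.pow_pos (n := M) (by norm_num)))
  obtain ⟨x, -, y, -, hxy, hPxy⟩ :=
    Finset.exists_ne_map_eq_of_card_lt_of_maps_to (by simp) hmaps
  wlog hlt : x < y generalizing x y
  · exact this y x hxy.symm hPxy.symm (by omega)
  refine ⟨Finset.Ico (N + 1 + x) (N + 1 + y), ⟨N + 1 + x, by simp [hlt]⟩,
    fun i hi => by simp at hi; omega, ?_⟩
  have hsum : P x + ∑ t ∈ Finset.Ico (N + 1 + x) (N + 1 + y), b.get t = P y := by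
    rw [hP]
    exact Finset.sum_Ico_consecutive _ (by omega) (by omega)
  have hmod : ∑ t ∈ Finset.Ico (N + 1 + x) (N + 1 + y), b.get t ≡ 0 [MOD 2 ^ M] := by
    apply Nat.ModEq.add_left_cancel' (P x)
    show P x + _ ≡ P x + 0 [MOD 2 ^ M]
    rw [hsum, Nat.add_zero]
    exact hPxy.symm
  exact (Nat.modEq_zero_iff_dvd).mp hmod

lemma FU_exists_blocks (b : Stream' ℕ) :
    ∃ g : ℕ → Finset ℕ,
      (∀ k, (g k).Nonempty) ∧
      (∀ k l, k < l → ∀ i ∈ g k, ∀ j ∈ g l, i < j) ∧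
      (∀ k, 2 ^ (1 + ∑ k' ∈ Finset.range k, ∑ i ∈ g k', b.get i) ∣ ∑ i ∈ g k, b.get i) := by
  choose s hne hgt hdvd using FU_exists_block b
  set step : Finset ℕ × ℕ × ℕ → Finset ℕ × ℕ × ℕ :=
    fun p => ((s p.2.1 (1 + p.2.2)), (s p.2.1 (1 + p.2.2)).sup id,
      p.2.2 + ∑ i ∈ s p.2.1 (1 + p.2.2), b.get i) with hstep
  set f : ℕ → Finset ℕ × ℕ × ℕ := fun k => k.rec (step (∅, 0, 0)) (fun _ p => step p) with hf
  have hfs : ∀ k, f (k + 1) = step (f k) := fun k => rfl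
  set g : ℕ → Finset ℕ := fun k => (f k).1 with hg
  set y : ℕ → ℕ := fun k => ∑ i ∈ g k, b.get i with hy
  have hN : ∀ k, (f k).2.1 = (g k).sup id := by
    intro k; cases k <;> rfl
  have hgne : ∀ k, (g k).Nonempty := by
    intro k; cases k with
    | zero => exact hne 0 1
    | succ k => exact hne _ _
  have hT : ∀ k, (f k).2.2 = ∑ k' ∈ Finset.range (k + 1), y k' := by
    intro k
    induction k with
    | zero => simp [hf, hy, hg, hstep]
    | succ k ih =>
      have h1 : (f (k + 1)).2.2 = (f k).2.2 + y (k + 1) := rfl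
      rw [h1, ih]; rw [Finset.sum_range_succ _ (k+1)]
  have hgtN : ∀ k, ∀ j ∈ g (k + 1), (f k).2.1 < j := by
    intro k j hj; exact hgt _ _ _ hj
  have hNlt : ∀ k, (f k).2.1 < (f (k+1)).2.1 := by
    intro k
    obtain ⟨j, hj⟩ := hgne (k + 1)
    calc (f k).2.1 < j := hgtN k j hj
    _ ≤ (f (k+1)).2.1 := by rw [hN (k+1)]; exact Finset.le_sup (f := id) hj
  have hNmono : StrictMono (fun k => (f k).2.1) := strictMono_nat_of_lt_succ hNlt
  refine ⟨g, hgne, ?_, ?_⟩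
  · intro k l hkl i hi j hj
    obtain ⟨l, rfl⟩ := Nat.exists_eq_add_of_lt hkl
    have h1 : i ≤ (f k).2.1 := by rw [hN k]; exact Finset.le_sup (f := id) hi
    have h2 : (f (k + l)).2.1 < j := hgtN _ _ hj
    have h3 : (f k).2.1 ≤ (f (k + l)).2.1 := hNmono.monotone (by omega)
    omega
  · intro k
    cases k with
    | zero => simpa [hg, hf, hstep] using hdvd 0 1
    | succ k =>
      have h1 : (∑ k' ∈ Finset.range (k+1), y k') = (f k).2.2 := (hT k).symm
      have := hdvd (f k).2.1 (1 + (f k).2.2)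
      show (2 : ℕ) ^ (1 + ∑ k' ∈ Finset.range (k+1), ∑ i ∈ g k', b.get i) ∣ ∑ i ∈ g (k+1), b.get i
      rw [show (∑ k' ∈ Finset.range (k+1), ∑ i ∈ g k', b.get i)
        = ∑ k' ∈ Finset.range (k+1), y k' from rfl, h1]
      exact this

end FUaux

/-- The Finite Unions Theorem. -/
theorem finite_unions (r : ℕ) (c : Finset ℕ → Fin r) :
    ∃ (i : Fin r) (𝒮 : Set (Finset ℕ)), 𝒮.Infinite ∧ (∀ S ∈ 𝒮, S.Nonempty) ∧
      𝒮.Pairwise Disjoint ∧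
      ∀ F : Finset (Finset ℕ), ↑F ⊆ 𝒮 → F.Nonempty → c (F.sup id) = i := by
  classical
  -- apply Hindman's theorem to the coloring by binary support
  set cls : Fin r → Set ℕ := fun i => {n : ℕ | 0 < n ∧ c (binSupp n) = i} with hcls
  have hone : ∀ j, (Stream'.const 1).get j = 1 := fun j => rfl
  obtain ⟨C, hC, b, hb⟩ := FS_partition_regular (Stream'.const 1) (Set.range cls)
    (Set.finite_range cls)
    (by
      intro x hx
      have hxpos : 0 < x := FU_FS_pos (fun j => by rw [hone j]; norm_num) hx
      exact ⟨cls (c (binSupp x)), Set.mem_range_self _, hxpos, rfl⟩)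
  obtain ⟨i, rfl⟩ := hC
  have hbpos : ∀ j, 0 < b.get j := fun j => (hb (FS.singleton b j)).1
  -- extract blocks
  obtain ⟨g, hgne, hsep, hdvd⟩ := FU_exists_blocks b
  set y : ℕ → ℕ := fun k => ∑ j ∈ g k, b.get j with hy
  have hypos : ∀ k, 0 < y k := fun k =>
    Finset.sum_pos (fun j _ => hbpos j) (hgne k)
  have hgdisj : ∀ k l, k ≠ l → Disjoint (g k) (g l) := by
    intro k l hkl
    rw [Finset.disjoint_left]
    rcases lt_or_gt_of_ne hkl with h | h
    · intro a ha hal; exact absurd (hsep k l h a ha a hal) (lt_irrefl a)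
    · intro a ha hal; exact absurd (hsep l k h a hal a ha) (lt_irrefl a)
  -- finite sums of the y's lie in FS b
  have hsumFS : ∀ K : Finset ℕ, K.Nonempty → ∑ k ∈ K, y k ∈ FS b := by
    intro K hK
    have : ∑ k ∈ K, y k = ∑ j ∈ K.biUnion g, b.get j :=
      (Finset.sum_biUnion (fun k _ l _ hkl => hgdisj k l hkl)).symm
    rw [this]
    refine FS.finset_sum b _ ?_
    obtain ⟨k, hk⟩ := hK
    obtain ⟨j, hj⟩ := hgne k
    exact ⟨j, Finset.mem_biUnion.mpr ⟨k, hk, hj⟩⟩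
  -- bound lemma: supports separate
  have hbound : ∀ l (m : ℕ), m ≤ ∑ k' ∈ Finset.range l, y k' →
      ∀ p ∈ binSupp m, ∀ q ∈ binSupp (y l), p < q := by
    intro l m hm p hp q hq
    have h1 : 2 ^ p ≤ m := two_pow_le_of_mem_binSupp hp
    have h2 : 1 + ∑ k' ∈ Finset.range l, y k' ≤ q :=
      le_of_mem_binSupp_dvd (hdvd l) hq
    have h3 : 2 ^ p ≤ ∑ k' ∈ Finset.range l, y k' := le_trans h1 hm
    have h4 : p < 2 ^ p := Nat.lt_two_pow_self
    omega
  -- key: support of a finite sum is the union of supports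
  have hsupp : ∀ K : Finset ℕ, binSupp (∑ k ∈ K, y k) = K.sup (fun k => binSupp (y k)) := by
    intro K
    induction K using Finset.strongInduction with
    | _ K ih =>
      rcases K.eq_empty_or_nonempty with rfl | hK
      · simp [binSupp]
      · set l := K.max' hK with hl
        have hlK : l ∈ K := K.max'_mem hK
        have hKsub : K.erase l ⊆ Finset.range l := by
          intro k hk
          rw [Finset.mem_range]
          exact lt_of_le_of_ne (K.le_max' k (Finset.mem_of_mem_erase hk))
            (Finset.ne_of_mem_erase hk)
        have hle : ∑ k ∈ K.erase l, y k ≤ ∑ k' ∈ Finset.range l, y k' :=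
          Finset.sum_le_sum_of_subset hKsub
        have hdisj : Disjoint (binSupp (∑ k ∈ K.erase l, y k)) (binSupp (y l)) := by
          rw [Finset.disjoint_left]
          intro p hp hpl
          exact absurd (hbound l _ hle p hp p hpl) (lt_irrefl p)
        have hsplit : ∑ k ∈ K, y k = ∑ k ∈ K.erase l, y k + y l :=
          (Finset.sum_erase_add K y hlK).symm
        rw [hsplit, binSupp_add hdisj, ih (K.erase l) (Finset.erase_ssubset hlK)]
        conv_rhs => rw [← Finset.insert_erase hlK]
        rw [Finset.sup_insert]
        exact (sup_comm _ _)
  -- the family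
  have hpairdisj : ∀ k l, k < l → Disjoint (binSupp (y k)) (binSupp (y l)) := by
    intro k l hkl
    rw [Finset.disjoint_left]
    intro p hp hpl
    have : y k ≤ ∑ k' ∈ Finset.range l, y k' :=
      Finset.single_le_sum (fun k' _ => Nat.zero_le _) (Finset.mem_range.mpr hkl)
    exact absurd (hbound l (y k) this p hp p hpl) (lt_irrefl p)
  have hsne : ∀ k, (binSupp (y k)).Nonempty := fun k => binSupp_nonempty (hypos k)
  have hinj : Function.Injective (fun k => binSupp (y k)) := by
    intro k l hklq
    have hq : binSupp (y k) = binSupp (y l) := hklq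
    by_contra hne
    rcases lt_or_gt_of_ne hne with h | h
    · have := hpairdisj k l h
      rw [hq] at this
      obtain ⟨p, hp⟩ := hsne l
      exact (Finset.disjoint_left.mp this hp) hp
    · have := hpairdisj l k h
      rw [hq] at this
      obtain ⟨p, hp⟩ := hsne l
      exact (Finset.disjoint_left.mp this hp) hp
  refine ⟨i, Set.range (fun k => binSupp (y k)), Set.infinite_range_of_injective hinj,
    ?_, ?_, ?_⟩
  · rintro S ⟨k, rfl⟩; exact hsne k
  · rintro S ⟨k, rfl⟩ T ⟨l, rfl⟩ hST
    have hkl : k ≠ l := fun h => hST (by rw [h])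
    rcases lt_or_gt_of_ne hkl with h | h
    · exact hpairdisj k l h
    · exact (hpairdisj l k h).symm
  · intro F hF hFne
    have hchoice : ∀ A ∈ F, ∃ k, binSupp (y k) = A := fun A hA => hF hA
    choose φ hφ using hchoice
    set K : Finset ℕ := F.attach.image (fun A => φ A.1 A.2) with hK
    have hKne : K.Nonempty := (Finset.attach_nonempty_iff.mpr hFne).image _
    have hsup : F.sup id = K.sup (fun k => binSupp (y k)) := by
      rw [hK, Finset.sup_image]
      have : ((fun k => binSupp (y k)) ∘ fun A : {x // x ∈ F} => φ A.1 A.2)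
          = fun A : {x // x ∈ F} => id A.1 := by
        funext A; exact hφ A.1 A.2
      rw [this, Finset.sup_attach]
    rw [hsup, ← hsupp K]
    exact (hb (hsumFS K hKne)).2
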